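/- An infinite group G is Z-cofinite if and only if every countable subgroup of G is Z-cofinite. -/

import Mathlib

/-- `G` is `Z`-cofinite: every elementary algebraic subset of `G`, i.e. every set of the form
`{x | g₁ x^{ε₁} ⋯ g_n x^{ε_n} = 1}` with `εᵢ ∈ {1,-1}`, encoded by a list of pairs
`(gᵢ, εᵢ)`, is either finite or all of `G`. -/
def ZCofinite (G : Type*) [Group G] : Prop :=
  ∀ w : List (G × ℤ), (∀ p ∈ w, p.2 = 1 ∨ p.2 = -1) →
    {x : G | (w.map (fun p => p.1 * x ^ p.2)).prod = 1}.Finite ∨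
    {x : G | (w.map (fun p => p.1 * x ^ p.2)).prod = 1} = Set.univ

private lemma countable_closure {G : Type*} [Group G] (s : Set G) (hs : s.Countable) :
    Countable (Subgroup.closure s) := by
  have : Countable s := hs.to_subtype
  have h1 : Subgroup.closure s = Subgroup.closure (Set.range (Subtype.val : s → G)) := by
    rw [Subtype.range_coe]
  have h2 : Subgroup.closure (Set.range (Subtype.val : s → G)) =
      (FreeGroup.lift (Subtype.val : s → G)).range :=
    (FreeGroup.range_lift_eq_closure).symm
  rw [h1, h2]
  have : Countable (FreeGroup s) := by unfold FreeGroup; infer_instance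
  have : (Set.range (FreeGroup.lift (Subtype.val : s → G))).Countable :=
    Set.countable_range _
  exact this.to_subtype

private lemma prod_coe {G : Type*} [Group G] {H : Subgroup G} (w : List (H × ℤ)) (y : H) :
    (((w.map (fun p => p.1 * y ^ p.2)).prod : H) : G) =
      (w.map (fun p => (p.1 : G) * (y : G) ^ p.2)).prod := by
  induction w with
  | nil => simp
  | cons p t ih =>
    simp only [List.map_cons, List.prod_cons, Subgroup.coe_mul]
    rw [ih]
    congr 1


/-- An infinite group `G` is `Z`-cofinite if and only if every countable subgroup of `G`
is `Z`-cofinite. -/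
theorem stmt_8 {G : Type*} [Group G] [Infinite G] :
    ZCofinite G ↔ ∀ H : Subgroup G, Countable H → ZCofinite H := by
  constructor
  · intro hG H _ w hw
    set w' : List (G × ℤ) := w.map (fun p => ((p.1 : G), p.2)) with hw'def
    have hw' : ∀ p ∈ w', p.2 = 1 ∨ p.2 = -1 := by
      intro p hp
      rw [hw'def, List.mem_map] at hp
      obtain ⟨q, hq, rfl⟩ := hp
      exact hw q hq
    have hset : {y : H | (w.map (fun p => p.1 * y ^ p.2)).prod = 1} =
        Subtype.val ⁻¹' {x : G | (w'.map (fun p => p.1 * x ^ p.2)).prod = 1} := by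
      ext y
      simp only [Set.mem_setOf_eq, Set.mem_preimage]
      rw [← Subtype.coe_inj, prod_coe, OneMemClass.coe_one]
      have hlist : w'.map (fun p => p.1 * (y : G) ^ p.2) =
          w.map (fun p => (p.1 : G) * (y : G) ^ p.2) := by
        rw [hw'def, List.map_map]
        rfl
      rw [hlist]
    rcases hG w' hw' with h | h
    · left
      rw [hset]
      exact h.preimage Subtype.val_injective.injOn
    · right
      rw [hset, h, Set.preimage_univ]
  · intro h w hw
    by_contra hc
    push_neg at hc
    obtain ⟨hnfin, hne⟩ := hc
    have hS : {x : G | (w.map (fun p => p.1 * x ^ p.2)).prod = 1}.Infinite := hnfin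
    obtain ⟨x, hx⟩ := Set.ne_univ_iff_exists_notMem _ |>.mp hne
    set S := {x : G | (w.map (fun p => p.1 * x ^ p.2)).prod = 1} with hSdef
    let f : ℕ ↪ S := hS.natEmbedding
    set s : Set G := (Prod.fst '' {p : G × ℤ | p ∈ w}) ∪
      (Set.range (fun n => ((f n : S) : G)) ∪ {x}) with hsdef
    have hscount : s.Countable := by
      refine Set.Countable.union ((w.finite_toSet.image _).countable) ?_
      exact (Set.countable_range _).union (Set.countable_singleton _)
    set H := Subgroup.closure s with hHdef
    have hHc : Countable H := countable_closure s hscount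
    have hmem : ∀ p ∈ w, p.1 ∈ H := by
      intro p hp
      exact Subgroup.subset_closure (Or.inl ⟨p, hp, rfl⟩)
    set w' : List (H × ℤ) := w.attach.map (fun p => (⟨p.1.1, hmem p.1 p.2⟩, p.1.2)) with hw'def
    have hcoe : w'.map (fun q => ((q.1 : G), q.2)) = w := by
      rw [hw'def, List.map_map]
      have heq : ((fun q : H × ℤ => ((q.1 : G), q.2)) ∘
          (fun p : {p // p ∈ w} => ((⟨p.1.1, hmem p.1 p.2⟩ : H), p.1.2))) =
          fun p : {p // p ∈ w} => p.1 := by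
        funext p; rfl
      rw [heq]
      exact List.attach_map_subtype_val w
    have hw' : ∀ p ∈ w', p.2 = 1 ∨ p.2 = -1 := by
      intro p hp
      rw [hw'def, List.mem_map] at hp
      obtain ⟨q, hq, rfl⟩ := hp
      exact hw q.1 q.2
    have hset : {y : H | (w'.map (fun p => p.1 * y ^ p.2)).prod = 1} =
        Subtype.val ⁻¹' S := by
      ext y
      simp only [Set.mem_setOf_eq, Set.mem_preimage, hSdef]
      rw [← Subtype.coe_inj, prod_coe, OneMemClass.coe_one]
      have hlist : w'.map (fun p => (p.1 : G) * (y : G) ^ p.2) =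
          w.map (fun p => p.1 * (y : G) ^ p.2) := by
        have h2 := congrArg (List.map (fun p : G × ℤ => p.1 * (y : G) ^ p.2)) hcoe
        rw [List.map_map] at h2
        exact h2
      rw [hlist]
    rcases h H hHc w' hw' with hfin | huniv
    · have hinf : {y : H | (w'.map (fun p => p.1 * y ^ p.2)).prod = 1}.Infinite := by
        refine Set.infinite_of_injective_forall_mem
          (f := fun n : ℕ => (⟨((f n : S) : G), Subgroup.subset_closure
            (Or.inr (Or.inl ⟨n, rfl⟩))⟩ : H)) ?_ ?_
        · intro a b hab
          simp only [Subtype.mk.injEq] at hab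
          exact f.injective (Subtype.coe_injective hab)
        · intro n
          rw [hset]
          exact (f n).2
      exact hinf hfin
    · have hxH : x ∈ H := Subgroup.subset_closure (Or.inr (Or.inr rfl))
      have hmem' : (⟨x, hxH⟩ : H) ∈
          {y : H | (w'.map (fun p => p.1 * y ^ p.2)).prod = 1} := by
        rw [huniv]; trivial
      rw [hset] at hmem'
      exact hx hmem'
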